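/- For every integer matrix A with m columns, every element g of the Graver basis of A satisfies ‖g‖_∞ ≤ (2m‖A‖_∞ + 1)^m, where the Graver basis consists of the ⊑-minimal nonzero integer vectors in the kernel of A. -/

import Mathlib

open Matrix Finset

def ConformalZ {n : ℕ} (x y : Fin n → ℤ) : Prop :=
  ∀ j, 0 ≤ x j * y j ∧ |x j| ≤ |y j|

def maxEnt {k m : ℕ} (A : Matrix (Fin k) (Fin m) ℤ) : ℕ :=
  Finset.univ.sup fun i => Finset.univ.sup fun j => (A i j).natAbs

lemma entry_le_maxEnt {k m : ℕ} (A : Matrix (Fin k) (Fin m) ℤ) (i : Fin k) (j : Fin m) :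
    (A i j).natAbs ≤ maxEnt A := by
  have h1 : (A i j).natAbs ≤ Finset.univ.sup (fun j' => (A i j').natAbs) :=
    Finset.le_sup (f := fun j' => (A i j').natAbs) (Finset.mem_univ j)
  have h2 : Finset.univ.sup (fun j' => (A i j').natAbs) ≤ maxEnt A :=
    Finset.le_sup (f := fun i' => Finset.univ.sup (fun j' => (A i' j').natAbs))
      (Finset.mem_univ i)
  exact le_trans h1 h2


lemma sum_over_support {M : Type*} [AddCommMonoid M] {m : ℕ} (Sc : Finset (Fin m))
    (F : Fin m → M) (h0 : ∀ j ∉ Sc, F j = 0) :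
    ∑ j : Fin m, F j = ∑ p : Fin Sc.card, F ((Sc.equivFin.symm p) : Fin m) := by
  have h1 : ∑ j : Fin m, F j = ∑ j ∈ Sc, F j :=
    (Finset.sum_subset (Finset.subset_univ Sc) (fun j _ hj => h0 j hj)).symm
  rw [h1, ← Finset.sum_coe_sort Sc F]
  exact Fintype.sum_equiv Sc.equivFin (fun v => F ↑v) (fun p => F ↑(Sc.equivFin.symm p))
    (fun v => by simp)

lemma abs_mulVec_le {k s : ℕ} (B : Matrix (Fin k) (Fin s) ℤ) (a : ℕ)
    (ha : ∀ i j, (B i j).natAbs ≤ a) (z : Fin s → ℤ) (Hn : ℕ)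
    (hz : ∀ j, |z j| ≤ (Hn : ℤ)) (i : Fin k) :
    |B.mulVec z i| ≤ (s * a * Hn : ℕ) := by
  have h1 : |B.mulVec z i| ≤ ∑ j : Fin s, |B i j * z j| := by
    simpa [Matrix.mulVec, dotProduct] using
      Finset.abs_sum_le_sum_abs (fun j => B i j * z j) Finset.univ
  have h2 : ∀ j : Fin s, |B i j * z j| ≤ ((a * Hn : ℕ) : ℤ) := by
    intro j
    rw [abs_mul]
    have hb : |B i j| ≤ (a : ℤ) := by
      rw [Int.abs_eq_natAbs]; exact_mod_cast ha i j
    push_cast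
    exact mul_le_mul hb (hz j) (abs_nonneg _) (by positivity)
  calc |B.mulVec z i| ≤ ∑ j : Fin s, |B i j * z j| := h1
    _ ≤ ∑ _j : Fin s, ((a * Hn : ℕ) : ℤ) := Finset.sum_le_sum fun j _ => h2 j
    _ = ((s * a * Hn : ℕ) : ℤ) := by
        rw [Finset.sum_const, Finset.card_univ, Fintype.card_fin, nsmul_eq_mul]
        push_cast; ring

lemma siegel {k s : ℕ} (hs : 0 < s) (B : Matrix (Fin k) (Fin s) ℤ) (a : ℕ)
    (ha : ∀ i j, (B i j).natAbs ≤ a)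
    (y : Fin s → ℚ) (hy : y ≠ 0)
    (hkery : (B.map (fun t : ℤ => (t : ℚ))).mulVec y = 0) :
    ∃ z : Fin s → ℤ, z ≠ 0 ∧ B.mulVec z = 0 ∧
      ∀ j, (z j).natAbs ≤ (2 * s * a + 1) ^ (s - 1) := by
  classical
  set Hn : ℕ := (2 * s * a + 1) ^ (s - 1) with hHn
  have hHn1 : 1 ≤ Hn := Nat.one_le_pow _ _ (by positivity)
  set rows : Fin k → (Fin s → ℚ) := fun i j => ((B i j : ℤ) : ℚ) with hrows
  set φ : (Fin s → ℚ) →ₗ[ℚ] ℚ := ∑ j : Fin s, y j • LinearMap.proj j with hφ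
  have hφapp : ∀ w, φ w = ∑ j : Fin s, y j * w j := by
    intro w; simp [hφ, LinearMap.sum_apply]
  have hφne : φ ≠ 0 := by
    obtain ⟨j, hj⟩ := Function.ne_iff.mp hy
    intro h
    have h2 := hφapp (Pi.single j 1)
    rw [h] at h2
    simp [Pi.single_apply] at h2
    exact hj (by simpa using h2.symm)
  have hrowker : ∀ i, φ (rows i) = 0 := by
    intro i
    have := congrFun hkery i
    rw [hφapp]
    simpa [Matrix.mulVec, dotProduct, hrows, mul_comm] using this
  obtain ⟨Sset, hSsub, hspan, hind⟩ := exists_linearIndependent ℚ (Set.range rows)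
  have hSfin : Sset.Finite := (Set.finite_range rows).subset hSsub
  haveI : Fintype ↑Sset := hSfin.fintype
  have hScard : Sset.toFinset.card ≤ s - 1 := by
    have h1 : Module.finrank ℚ (Submodule.span ℚ Sset) = Sset.toFinset.card :=
      finrank_span_set_eq_card hind
    have h2 : Submodule.span ℚ Sset ≤ LinearMap.ker φ := by
      rw [Submodule.span_le]
      intro v hv
      obtain ⟨i, rfl⟩ := hSsub hv
      exact hrowker i
    have h3 : LinearMap.ker φ < ⊤ := lt_top_iff_ne_top.mpr (by
      intro h
      apply hφne
      apply LinearMap.ext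
      intro w
      have hw : w ∈ LinearMap.ker φ := by rw [h]; trivial
      simpa using hw)
    have h4 := Submodule.finrank_lt (K := ℚ) (V := Fin s → ℚ) h3.ne
    have h5 := Submodule.finrank_mono h2
    simp only [h1] at h5
    have h6 : Module.finrank ℚ (Fin s → ℚ) = s := by simp
    omega
  have hpick : ∀ v : ↑Sset.toFinset, ∃ i, rows i = (v : Fin s → ℚ) := by
    intro v
    exact hSsub (Set.mem_toFinset.mp v.2)
  choose f hf using hpick
  set D : Finset (Fin s → ℤ) := Finset.Icc 0 (fun _ => (Hn : ℤ)) with hD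
  set E : Finset (↑Sset.toFinset → ℤ) :=
    Finset.Icc (fun _ => -((s * a * Hn : ℕ) : ℤ)) (fun _ => ((s * a * Hn : ℕ) : ℤ)) with hE
  have hDcard : D.card = (Hn + 1) ^ s := by
    rw [hD, Pi.card_Icc]
    simp only [Pi.zero_apply]
    rw [Finset.prod_const, Int.card_Icc, Finset.card_univ, Fintype.card_fin]
    have h : ((Hn:ℤ) + 1 - 0).toNat = Hn + 1 := by omega
    rw [h]
  have hEcard : E.card = (2 * (s * a * Hn) + 1) ^ Sset.toFinset.card := by
    rw [hE, Pi.card_Icc, Finset.prod_const, Int.card_Icc, Finset.card_univ, Fintype.card_coe]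
    have h : (((s * a * Hn : ℕ) : ℤ) + 1 - -((s * a * Hn : ℕ) : ℤ)).toNat = 2 * (s * a * Hn) + 1 := by omega
    rw [h]
  have hlt : E.card < D.card := by
    rw [hDcard, hEcard]
    calc (2 * (s * a * Hn) + 1) ^ Sset.toFinset.card
        ≤ (2 * (s * a * Hn) + 1) ^ (s - 1) := Nat.pow_le_pow_right (by omega) hScard
      _ ≤ ((2 * s * a + 1) * Hn) ^ (s - 1) := by
          apply Nat.pow_le_pow_left
          nlinarith [hHn1]
      _ = Hn ^ s := by
          rw [mul_pow, ← hHn, ← pow_succ']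
          congr 1
          omega
      _ < (Hn + 1) ^ s := Nat.pow_lt_pow_left (by omega) (by omega)
  have hmaps : ∀ z ∈ D, (fun v : ↑Sset.toFinset => B.mulVec z (f v)) ∈ E := by
    intro z hz
    rw [hD, Finset.mem_Icc] at hz
    have hzb : ∀ j, |z j| ≤ (Hn : ℤ) := by
      intro j
      have h1 := hz.1 j
      have h2 := hz.2 j
      simp only [Pi.zero_apply] at h1
      rw [abs_le]; exact ⟨by omega, h2⟩
    rw [hE, Finset.mem_Icc]
    constructor
    · intro v; exact neg_le_of_abs_le (abs_mulVec_le B a ha z Hn hzb (f v))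
    · intro v; exact le_of_abs_le (abs_mulVec_le B a ha z Hn hzb (f v))
  obtain ⟨z₁, hz₁, z₂, hz₂, hne, heq⟩ := Finset.exists_ne_map_eq_of_card_lt_of_maps_to hlt hmaps
  refine ⟨z₁ - z₂, sub_ne_zero.mpr hne, ?_, ?_⟩
  · set d : Fin s → ℚ := fun j => ((z₁ j - z₂ j : ℤ) : ℚ) with hd
    set ψ : (Fin s → ℚ) →ₗ[ℚ] ℚ := ∑ j : Fin s, d j • LinearMap.proj j with hψ
    have hψapp : ∀ w, ψ w = ∑ j : Fin s, d j * w j := by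
      intro w; simp [hψ, LinearMap.sum_apply]
    have hgen : ∀ v ∈ Sset, ψ v = 0 := by
      intro v hv
      have hv' : v ∈ Sset.toFinset := Set.mem_toFinset.mpr hv
      have h1 := congrFun heq ⟨v, hv'⟩
      rw [hψapp]
      have hveq : v = rows (f ⟨v, hv'⟩) := (hf ⟨v, hv'⟩).symm
      rw [hveq]
      have hsum : ∑ j : Fin s, d j * rows (f ⟨v, hv'⟩) j
          = ((B.mulVec z₁ (f ⟨v, hv'⟩) : ℤ) : ℚ) - ((B.mulVec z₂ (f ⟨v, hv'⟩) : ℤ) : ℚ) := by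
        simp only [hd, hrows, Matrix.mulVec, dotProduct]
        push_cast
        rw [← Finset.sum_sub_distrib]
        apply Finset.sum_congr rfl
        intro j _
        ring
      rw [hsum, h1]
      ring
    have hker' : ∀ i, ψ (rows i) = 0 := by
      intro i
      have hmem : rows i ∈ Submodule.span ℚ Sset := by
        rw [hspan]
        exact Submodule.subset_span ⟨i, rfl⟩
      have hle : Submodule.span ℚ Sset ≤ LinearMap.ker ψ := by
        rw [Submodule.span_le]; intro v hv; exact hgen v hv
      exact hle hmem
    ext i
    have hψr := hker' i
    rw [hψapp] at hψr
    have hcast : ((∑ j : Fin s, B i j * (z₁ j - z₂ j) : ℤ) : ℚ) = 0 := by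
      push_cast
      rw [← hψr]
      apply Finset.sum_congr rfl
      intro j _
      simp only [hd, hrows]
      push_cast
      ring
    have hz0 : (∑ j : Fin s, B i j * (z₁ j - z₂ j) : ℤ) = 0 := by exact_mod_cast hcast
    show B.mulVec (z₁ - z₂) i = 0
    simpa [Matrix.mulVec, dotProduct] using hz0
  · intro j
    rw [hD, Finset.mem_Icc] at hz₁ hz₂
    have h1 : (0:ℤ) ≤ z₁ j := hz₁.1 j
    have h2 : z₁ j ≤ (Hn:ℤ) := hz₁.2 j
    have h3 : (0:ℤ) ≤ z₂ j := hz₂.1 j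
    have h4 : z₂ j ≤ (Hn:ℤ) := hz₂.2 j
    have habs : |z₁ j - z₂ j| ≤ (Hn : ℤ) := by rw [abs_le]; constructor <;> omega
    rw [Int.abs_eq_natAbs] at habs
    show ((z₁ - z₂) j).natAbs ≤ Hn
    rw [Pi.sub_apply]
    exact_mod_cast habs


lemma parallel_of_minimal {k m : ℕ} (Aq : Matrix (Fin k) (Fin m) ℚ) (g : Fin m → ℤ)
    (x c : Fin m → ℚ)
    (hc0 : c ≠ 0) (hcker : Aq.mulVec c = 0)
    (hcsign : ∀ j, 0 ≤ c j * (g j : ℚ))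
    (hcsupp : ∀ j, x j = 0 → c j = 0)
    (hmin : ∀ v : Fin m → ℚ, v ≠ 0 → Aq.mulVec v = 0 → (∀ j, 0 ≤ v j * (g j : ℚ)) →
      (∀ j, x j = 0 → v j = 0) →
      (Finset.univ.filter (fun j => c j ≠ 0)).card ≤ (Finset.univ.filter (fun j => v j ≠ 0)).card)
    (w : Fin m → ℚ) (hwker : Aq.mulVec w = 0) (hwsupp : ∀ j, c j = 0 → w j = 0) :
    ∃ γ : ℚ, w = γ • c := by
  classical
  obtain ⟨j0, hj0⟩ : ∃ j0, c j0 ≠ 0 := Function.ne_iff.mp hc0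
  set u : Fin m → ℚ := (w j0) • c - (c j0) • w with hu
  have huapp : ∀ j, u j = w j0 * c j - c j0 * w j := by intro j; simp [hu]
  by_cases hu0 : u = 0
  · have hg : ∀ j, c j0 * w j = w j0 * c j := by
      intro j
      have h := congrFun hu0 j
      rw [huapp] at h
      simp only [Pi.zero_apply] at h
      linarith
    refine ⟨w j0 / c j0, funext fun j => ?_⟩
    simp only [Pi.smul_apply, smul_eq_mul]
    rw [div_mul_eq_mul_div, eq_div_iff hj0]
    linarith [hg j]
  · exfalso
    have huker : Aq.mulVec u = 0 := by
      rw [hu, Matrix.mulVec_sub, Matrix.mulVec_smul, Matrix.mulVec_smul, hcker, hwker]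
      simp
    have husupp : ∀ j, c j = 0 → u j = 0 := by
      intro j hj
      rw [huapp, hj, hwsupp j hj]
      ring
    have huj0 : u j0 = 0 := by rw [huapp]; ring
    set Su : Finset (Fin m) := Finset.univ.filter (fun j => u j ≠ 0) with hSu
    have hSune : Su.Nonempty := by
      obtain ⟨j, hj⟩ := Function.ne_iff.mp hu0
      have hj' : u j ≠ 0 := by simpa using hj
      exact ⟨j, by simp [hSu, hj']⟩
    obtain ⟨js, hjs, hjsmin⟩ := Finset.exists_min_image Su (fun j => |c j / u j|) hSune
    have hujs : u js ≠ 0 := by simpa [hSu] using hjs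
    have hcjs : c js ≠ 0 := fun h => hujs (husupp js h)
    set lam : ℚ := c js / u js with hlam
    set v : Fin m → ℚ := c - lam • u with hv
    have hvapp : ∀ j, v j = c j - lam * u j := by intro j; simp [hv]
    have hbound : ∀ j, u j ≠ 0 → |lam * u j| ≤ |c j| := by
      intro j hj
      have hmem : j ∈ Su := by simp [hSu, hj]
      have h1 := hjsmin j hmem
      rw [hlam, abs_div, abs_div] at h1
      rw [abs_mul, ← le_div_iff₀ (abs_pos.mpr hj), hlam, abs_div]
      exact h1
    have hvjs : v js = 0 := by rw [hvapp, hlam]; field_simp; ring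
    have hv0 : v ≠ 0 := by
      intro h
      have := congrFun h j0
      rw [hvapp, huj0] at this
      simp at this
      exact hj0 this
    have hvker : Aq.mulVec v = 0 := by
      rw [hv, Matrix.mulVec_sub, Matrix.mulVec_smul, hcker, huker]
      simp
    have hvsupp : ∀ j, c j = 0 → v j = 0 := by
      intro j hj
      by_cases hju : u j = 0
      · rw [hvapp, hj, hju]; ring
      · have hb := hbound j hju
        rw [hj] at hb
        simp only [abs_zero] at hb
        have h0 : lam * u j = 0 := abs_nonpos_iff.mp hb
        rw [hvapp, hj, h0]
        ring
    have hvsign : ∀ j, 0 ≤ v j * (g j : ℚ) := by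
      intro j
      by_cases hju : u j = 0
      · rw [hvapp, hju]
        simpa using hcsign j
      · have hcj : c j ≠ 0 := fun h => hju (husupp j h)
        have h1 : |lam * u j| ≤ |c j| := hbound j hju
        have h2 : 0 ≤ v j * c j := by
          rw [hvapp]
          have ha1 : lam * u j * c j ≤ |lam * u j| * |c j| := by
            calc lam * u j * c j ≤ |lam * u j * c j| := le_abs_self _
              _ = |lam * u j| * |c j| := abs_mul _ _
          have ha2 : |lam * u j| * |c j| ≤ |c j| * |c j| :=
            mul_le_mul_of_nonneg_right h1 (abs_nonneg _)
          have ha3 : |c j| * |c j| = c j * c j := by rw [← abs_mul, abs_mul_self]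
          nlinarith
        have h3 := hcsign j
        have hc2 : 0 < c j * c j := mul_self_pos.mpr hcj
        nlinarith [mul_nonneg h2 h3]
    have hvx : ∀ j, x j = 0 → v j = 0 := fun j hj => hvsupp j (hcsupp j hj)
    have hcard := hmin v hv0 hvker hvsign hvx
    have hsub : (Finset.univ.filter (fun j => v j ≠ 0)) ⊆
        (Finset.univ.filter (fun j => c j ≠ 0)).erase js := by
      intro j hj
      simp only [Finset.mem_filter, Finset.mem_univ, true_and] at hj
      rw [Finset.mem_erase]
      constructor
      · intro h; rw [h] at hj; exact hj hvjs
      · simp only [Finset.mem_filter, Finset.mem_univ, true_and]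
        intro h; exact hj (hvsupp j h)
    have hjsc : js ∈ Finset.univ.filter (fun j => c j ≠ 0) := by
      simp [hcjs]
    have := Finset.card_le_card hsub
    have hlt := Finset.card_erase_lt_of_mem hjsc
    omega


set_option maxHeartbeats 1600000 in
lemma decomp {k m : ℕ} (A : Matrix (Fin k) (Fin m) ℤ) (g : Fin m → ℤ) :
    ∀ n : ℕ, ∀ x : Fin m → ℚ,
    (Finset.univ.filter (fun j => x j ≠ 0)).card ≤ n →
    (A.map (fun t : ℤ => (t : ℚ))).mulVec x = 0 →
    (∀ j, 0 ≤ x j * (g j : ℚ)) →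
    (∀ j, g j = 0 → x j = 0) →
    ∃ (t : ℕ) (lam : Fin t → ℚ) (z : Fin t → (Fin m → ℤ)),
      t ≤ (Finset.univ.filter (fun j => x j ≠ 0)).card ∧
      (∀ i, 0 < lam i) ∧ (∀ i, z i ≠ 0) ∧ (∀ i, A.mulVec (z i) = 0) ∧
      (∀ i j, (z i j).natAbs ≤ (2 * m * maxEnt A + 1) ^ (m - 1)) ∧
      (∀ i j, 0 ≤ ((z i j : ℚ)) * (g j : ℚ)) ∧
      (∀ i j, g j = 0 → z i j = 0) ∧
      (∀ j, x j = ∑ i, lam i * ((z i j : ℚ))) := by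
  classical
  intro n
  induction n with
  | zero =>
    intro x hcard _ _ _
    have hx0 : x = 0 := by
      funext j
      by_contra hj
      have hmem : j ∈ Finset.univ.filter (fun j => x j ≠ 0) := by
        simp only [Finset.mem_filter, Finset.mem_univ, true_and]
        exact hj
      have := Finset.card_pos.mpr ⟨j, hmem⟩
      omega
    refine ⟨0, Fin.elim0, Fin.elim0, Nat.zero_le _, (fun i => i.elim0), (fun i => i.elim0),
      (fun i => i.elim0), (fun i => i.elim0), (fun i => i.elim0), (fun i => i.elim0), ?_⟩
    intro j
    rw [hx0]
    simp
  | succ n ih =>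
    intro x hcard hker hsign hsupp
    by_cases hx0 : x = 0
    · refine ⟨0, Fin.elim0, Fin.elim0, Nat.zero_le _, (fun i => i.elim0), (fun i => i.elim0),
        (fun i => i.elim0), (fun i => i.elim0), (fun i => i.elim0), (fun i => i.elim0), ?_⟩
      intro j
      rw [hx0]
      simp
    set Aq : Matrix (Fin k) (Fin m) ℚ := A.map (fun t : ℤ => (t : ℚ)) with hAq
    set P : (Fin m → ℚ) → Prop := fun v =>
      v ≠ 0 ∧ Aq.mulVec v = 0 ∧ (∀ j, 0 ≤ v j * (g j : ℚ)) ∧ (∀ j, x j = 0 → v j = 0)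
      with hP
    have hPx : P x := ⟨hx0, hker, hsign, fun j h => h⟩
    set cset : Set ℕ := {d | ∃ v, P v ∧ (Finset.univ.filter (fun j => v j ≠ 0)).card = d}
      with hcset
    have hcne : cset.Nonempty := ⟨_, x, hPx, rfl⟩
    obtain ⟨c, hPc, hccard⟩ := Nat.sInf_mem hcne
    have hminc : ∀ v, P v → (Finset.univ.filter (fun j => c j ≠ 0)).card ≤
        (Finset.univ.filter (fun j => v j ≠ 0)).card := by
      intro v hv
      rw [hccard]
      exact Nat.sInf_le ⟨v, hv, rfl⟩
    obtain ⟨hc0, hcker, hcsign, hcsupp⟩ := hPc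
    set Sc : Finset (Fin m) := Finset.univ.filter (fun j => c j ≠ 0) with hSc
    have hScne : Sc.Nonempty := by
      obtain ⟨j, hj⟩ := Function.ne_iff.mp hc0
      exact ⟨j, by simp [hSc]; simpa using hj⟩
    have hs : 0 < Sc.card := Finset.card_pos.mpr hScne
    have hsm : Sc.card ≤ m := by
      have := Finset.card_filter_le (Finset.univ : Finset (Fin m)) (fun j => c j ≠ 0)
      simpa using this
    set emb : Fin Sc.card → Fin m := fun p => ((Sc.equivFin.symm p) : Fin m) with hemb
    have hembmem : ∀ p, emb p ∈ Sc := fun p => (Sc.equivFin.symm p).2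
    set B : Matrix (Fin k) (Fin Sc.card) ℤ := Matrix.of (fun i p => A i (emb p)) with hB
    set y : Fin Sc.card → ℚ := fun p => c (emb p) with hy'
    have hy0 : y ≠ 0 := by
      obtain ⟨j, hj⟩ := hScne
      have hcj : c j ≠ 0 := by simpa [hSc] using hj
      apply Function.ne_iff.mpr
      refine ⟨Sc.equivFin ⟨j, hj⟩, ?_⟩
      have : emb (Sc.equivFin ⟨j, hj⟩) = j := by simp [hemb]
      simp only [hy', this]
      simpa using hcj
    have hkerB : (B.map (fun t : ℤ => (t : ℚ))).mulVec y = 0 := by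
      funext i
      have h0 : ∀ j ∉ Sc, (A i j : ℚ) * c j = 0 := by
        intro j hj
        have : c j = 0 := by simpa [hSc] using hj
        rw [this, mul_zero]
      have := sum_over_support Sc (fun j => ((A i j : ℤ) : ℚ) * c j) h0
      have hc := congrFun hcker i
      simp only [hAq, Matrix.mulVec, dotProduct, Matrix.map_apply] at hc
      simp only [Matrix.mulVec, dotProduct, Matrix.map_apply, hB, Matrix.of_apply,
        hy', Pi.zero_apply]
      rw [← this]
      exact hc
    obtain ⟨z', hz'0, hz'ker, hz'bound⟩ :=
      siegel hs B (maxEnt A) (fun i p => entry_le_maxEnt A i (emb p)) y hy0 hkerB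
    have hCb : (2 * Sc.card * maxEnt A + 1) ^ (Sc.card - 1) ≤
        (2 * m * maxEnt A + 1) ^ (m - 1) := by
      calc (2 * Sc.card * maxEnt A + 1) ^ (Sc.card - 1)
          ≤ (2 * m * maxEnt A + 1) ^ (Sc.card - 1) := by
            apply Nat.pow_le_pow_left
            have : 2 * Sc.card * maxEnt A ≤ 2 * m * maxEnt A :=
              Nat.mul_le_mul_right _ (Nat.mul_le_mul_left _ hsm)
            omega
        _ ≤ (2 * m * maxEnt A + 1) ^ (m - 1) :=
            Nat.pow_le_pow_right (by omega) (by omega)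
    set z'' : Fin m → ℤ := fun j => if h : j ∈ Sc then z' (Sc.equivFin ⟨j, h⟩) else 0 with hz''
    have hz''emb : ∀ p, z'' (emb p) = z' p := by
      intro p
      have h : emb p ∈ Sc := hembmem p
      simp only [hz'', dif_pos h]
      congr 1
      have he : (⟨emb p, h⟩ : {x // x ∈ Sc}) = Sc.equivFin.symm p := Subtype.ext rfl
      rw [he, Equiv.apply_symm_apply]
    have hz''supp : ∀ j, j ∉ Sc → z'' j = 0 := by
      intro j hj
      simp only [hz'', dif_neg hj]
    have hz''csupp : ∀ j, c j = 0 → z'' j = 0 := by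
      intro j hj
      apply hz''supp
      simp [hSc, hj]
    have hz''0 : z'' ≠ 0 := by
      obtain ⟨p, hp⟩ := Function.ne_iff.mp hz'0
      apply Function.ne_iff.mpr
      refine ⟨emb p, ?_⟩
      rw [hz''emb p]
      simpa using hp
    have hz''ker : A.mulVec z'' = 0 := by
      funext i
      have h0 : ∀ j ∉ Sc, A i j * z'' j = 0 := by
        intro j hj
        rw [hz''supp j hj, mul_zero]
      have hsum := sum_over_support Sc (fun j => A i j * z'' j) h0
      simp only [Matrix.mulVec, dotProduct, Pi.zero_apply]
      rw [hsum]
      have hzk := congrFun hz'ker i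
      simp only [Matrix.mulVec, dotProduct, hB, Matrix.of_apply, Pi.zero_apply] at hzk
      rw [← hzk]
      apply Finset.sum_congr rfl
      intro p _
      show A i (emb p) * z'' (emb p) = A i (emb p) * z' p
      rw [hz''emb p]
    have hz''bound : ∀ j, (z'' j).natAbs ≤ (2 * m * maxEnt A + 1) ^ (m - 1) := by
      intro j
      by_cases h : j ∈ Sc
      · simp only [hz'', dif_pos h]
        exact le_trans (hz'bound _) hCb
      · simp [hz'', dif_neg h]
    have hz''kerq : Aq.mulVec (fun j => ((z'' j : ℤ) : ℚ)) = 0 := by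
      funext i
      have := congrFun hz''ker i
      simp only [Matrix.mulVec, dotProduct, Pi.zero_apply] at this ⊢
      simp only [hAq, Matrix.map_apply]
      have hc : ((∑ j, A i j * z'' j : ℤ) : ℚ) = 0 := by rw [this]; simp
      push_cast at hc
      exact hc
    obtain ⟨γ, hγ⟩ := parallel_of_minimal Aq g x c hc0 hcker hcsign hcsupp
      (fun v hv1 hv2 hv3 hv4 => hminc v ⟨hv1, hv2, hv3, hv4⟩)
      (fun j => ((z'' j : ℤ) : ℚ)) hz''kerq
      (fun j hj => by show ((z'' j : ℤ) : ℚ) = 0; rw [hz''csupp j hj]; exact Int.cast_zero)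
    have hγ0 : γ ≠ 0 := by
      intro h
      rw [h] at hγ
      apply hz''0
      funext j
      have := congrFun hγ j
      simp at this
      exact this
    set z₀ : Fin m → ℤ := if 0 < γ then z'' else -z'' with hz₀def
    set γ₀ : ℚ := |γ| with hγ₀
    have hγ₀pos : 0 < γ₀ := abs_pos.mpr hγ0
    have hz₀ : ∀ j, ((z₀ j : ℤ) : ℚ) = γ₀ * c j := by
      intro j
      have hj := congrFun hγ j
      simp only [Pi.smul_apply, smul_eq_mul] at hj
      by_cases hpos : 0 < γ
      · simp only [hz₀def, if_pos hpos, hγ₀, abs_of_pos hpos]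
        exact hj
      · have hneg : γ < 0 := lt_of_le_of_ne (not_lt.mp hpos) hγ0
        simp only [hz₀def, if_neg hpos, hγ₀, abs_of_neg hneg, Pi.neg_apply]
        push_cast
        rw [hj]
        ring
    have hz₀0 : z₀ ≠ 0 := by
      simp only [hz₀def]
      split_ifs
      · exact hz''0
      · simpa using hz''0
    have hz₀ker : A.mulVec z₀ = 0 := by
      simp only [hz₀def]
      split_ifs
      · exact hz''ker
      · rw [Matrix.mulVec_neg, hz''ker, neg_zero]
    have hz₀bound : ∀ j, (z₀ j).natAbs ≤ (2 * m * maxEnt A + 1) ^ (m - 1) := by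
      intro j
      simp only [hz₀def]
      split_ifs
      · exact hz''bound j
      · simpa using hz''bound j
    have hz₀sign : ∀ j, 0 ≤ ((z₀ j : ℤ) : ℚ) * (g j : ℚ) := by
      intro j
      rw [hz₀ j, mul_assoc]
      exact mul_nonneg hγ₀pos.le (hcsign j)
    have hz₀csupp : ∀ j, c j = 0 → z₀ j = 0 := by
      intro j hj
      have := hz₀ j
      rw [hj, mul_zero] at this
      exact_mod_cast this
    have hz₀gsupp : ∀ j, g j = 0 → z₀ j = 0 :=
      fun j hj => hz₀csupp j (hcsupp j (hsupp j hj))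
    have hz₀Sc : ∀ j, j ∈ Sc → z₀ j ≠ 0 := by
      intro j hj h0
      have hcj : c j ≠ 0 := by simpa [hSc] using hj
      have := hz₀ j
      rw [h0] at this
      simp at this
      rcases this with h | h
      · exact hγ₀pos.ne' (by simpa [hγ₀] using h)
      · exact hcj h
    -- ratios
    have hρpos : ∀ j ∈ Sc, 0 < x j / ((z₀ j : ℤ) : ℚ) := by
      intro j hj
      have hcj : c j ≠ 0 := by simpa [hSc] using hj
      have hxj : x j ≠ 0 := fun h => hcj (hcsupp j h)
      have hgj : g j ≠ 0 := fun h => hxj (hsupp j h)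
      have hgq : ((g j : ℤ) : ℚ) ≠ 0 := Int.cast_ne_zero.mpr hgj
      have hzj : ((z₀ j : ℤ) : ℚ) ≠ 0 := Int.cast_ne_zero.mpr (hz₀Sc j hj)
      have hxg : 0 < x j * (g j : ℚ) :=
        lt_of_le_of_ne (hsign j) (Ne.symm (mul_ne_zero hxj hgq))
      have hzg : 0 < ((z₀ j : ℤ) : ℚ) * (g j : ℚ) :=
        lt_of_le_of_ne (hz₀sign j) (Ne.symm (mul_ne_zero hzj hgq))
      have hxz : 0 < x j * ((z₀ j : ℤ) : ℚ) := by
        nlinarith [mul_pos hxg hzg, mul_self_pos.mpr hgq]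
      rw [div_pos_iff]
      rcases lt_trichotomy ((z₀ j : ℤ) : ℚ) 0 with h | h | h
      · right
        constructor
        · nlinarith
        · exact h
      · exact absurd h hzj
      · left
        constructor
        · nlinarith
        · exact h
    obtain ⟨js, hjs, hjsmin⟩ := Finset.exists_min_image Sc (fun j => x j / ((z₀ j : ℤ) : ℚ)) hScne
    set lamst : ℚ := x js / ((z₀ js : ℤ) : ℚ) with hlamst
    have hlamstpos : 0 < lamst := hρpos js hjs
    set x' : Fin m → ℚ := fun j => x j - lamst * ((z₀ j : ℤ) : ℚ) with hx'
    have hz₀kerq : Aq.mulVec (fun j => ((z₀ j : ℤ) : ℚ)) = 0 := by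
      funext i
      have := congrFun hz₀ker i
      simp only [Matrix.mulVec, dotProduct, Pi.zero_apply] at this ⊢
      simp only [hAq, Matrix.map_apply]
      have hc : ((∑ j, A i j * z₀ j : ℤ) : ℚ) = 0 := by rw [this]; simp
      push_cast at hc
      exact hc
    have hx'ker : Aq.mulVec x' = 0 := by
      funext i
      have h1 := congrFun hker i
      have h2 := congrFun hz₀kerq i
      simp only [hAq, Matrix.mulVec, dotProduct, Matrix.map_apply, Pi.zero_apply]
        at h1 h2 ⊢
      have : ∑ j, ((A i j : ℤ) : ℚ) * x' j
          = (∑ j, ((A i j : ℤ) : ℚ) * x j) - lamst * ∑ j, ((A i j : ℤ) : ℚ) * ((z₀ j : ℤ) : ℚ) := by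
        rw [Finset.mul_sum, ← Finset.sum_sub_distrib]
        apply Finset.sum_congr rfl
        intro j _
        simp only [hx']
        ring
      rw [this, h1, h2]
      ring
    have hx'supp0 : ∀ j, x j = 0 → x' j = 0 := by
      intro j hj
      have hcj : c j = 0 := hcsupp j hj
      have : z₀ j = 0 := hz₀csupp j hcj
      simp [hx', hj, this]
    have hx'js : x' js = 0 := by
      have hzj : ((z₀ js : ℤ) : ℚ) ≠ 0 := Int.cast_ne_zero.mpr (hz₀Sc js hjs)
      simp only [hx', hlamst]
      field_simp
      ring
    have hxjs : x js ≠ 0 := by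
      have hcj : c js ≠ 0 := by simpa [hSc] using hjs
      exact fun h => hcj (hcsupp js h)
    have hx'card : (Finset.univ.filter (fun j => x' j ≠ 0)).card ≤ n := by
      have hsub : Finset.univ.filter (fun j => x' j ≠ 0) ⊆
          (Finset.univ.filter (fun j => x j ≠ 0)).erase js := by
        intro j hj
        simp only [Finset.mem_filter, Finset.mem_univ, true_and] at hj
        rw [Finset.mem_erase]
        constructor
        · intro h
          rw [h] at hj
          exact hj hx'js
        · simp only [Finset.mem_filter, Finset.mem_univ, true_and]
          intro h
          exact hj (hx'supp0 j h)
      have hjsmem : js ∈ Finset.univ.filter (fun j => x j ≠ 0) := by simp [hxjs]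
      have h1 := Finset.card_le_card hsub
      have h2 := Finset.card_erase_of_mem hjsmem
      have h3 := Finset.card_pos.mpr ⟨js, hjsmem⟩
      omega
    have hx'sign : ∀ j, 0 ≤ x' j * (g j : ℚ) := by
      intro j
      by_cases hj : j ∈ Sc
      · have hzj : ((z₀ j : ℤ) : ℚ) ≠ 0 := Int.cast_ne_zero.mpr (hz₀Sc j hj)
        have hmin' := hjsmin j hj
        have hxeq : x j = (x j / ((z₀ j : ℤ) : ℚ)) * ((z₀ j : ℤ) : ℚ) := by field_simp
        have hx'z : 0 ≤ x' j * ((z₀ j : ℤ) : ℚ) := by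
          simp only [hx']
          rw [sub_mul]
          calc (0:ℚ) ≤ ((x j / ((z₀ j : ℤ) : ℚ)) - lamst) * (((z₀ j : ℤ) : ℚ) * ((z₀ j : ℤ) : ℚ)) := by
                apply mul_nonneg
                · rw [sub_nonneg]
                  exact hjsmin j hj
                · exact (mul_self_nonneg _)
            _ = x j * ((z₀ j : ℤ) : ℚ) - lamst * ((z₀ j : ℤ) : ℚ) * ((z₀ j : ℤ) : ℚ) := by
                field_simp
        have hzg := hz₀sign j
        have hz2 : 0 < ((z₀ j : ℤ) : ℚ) * ((z₀ j : ℤ) : ℚ) := mul_self_pos.mpr hzj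
        nlinarith [mul_nonneg hx'z hzg]
      · have hcj : c j = 0 := by
          by_contra h
          exact hj (by simp [hSc, h])
        have : z₀ j = 0 := hz₀csupp j hcj
        simp only [hx', this]
        simpa using hsign j
    have hx'gsupp : ∀ j, g j = 0 → x' j = 0 := fun j hj => hx'supp0 j (hsupp j hj)
    obtain ⟨t', lam', zs', ht'le, hlampos, hzs0, hzsker, hzsbound, hzssign, hzsgsupp, hzssum⟩ :=
      ih x' hx'card hx'ker hx'sign hx'gsupp
    set Lam : Fin (t' + 1) → ℚ := Fin.cons lamst lam' with hLam
    set Zs : Fin (t' + 1) → (Fin m → ℤ) := Fin.cons z₀ zs' with hZs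
    refine ⟨t' + 1, Lam, Zs, ?_, ?_, ?_, ?_, ?_, ?_, ?_, ?_⟩
    · have hjsmem : js ∈ Finset.univ.filter (fun j => x j ≠ 0) := by simp [hxjs]
      have hsub : Finset.univ.filter (fun j => x' j ≠ 0) ⊆
          (Finset.univ.filter (fun j => x j ≠ 0)).erase js := by
        intro j hj
        simp only [Finset.mem_filter, Finset.mem_univ, true_and] at hj
        rw [Finset.mem_erase]
        refine ⟨fun h => by rw [h] at hj; exact hj hx'js, ?_⟩
        simp only [Finset.mem_filter, Finset.mem_univ, true_and]
        exact fun h => hj (hx'supp0 j h)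
      have h1 := Finset.card_le_card hsub
      have h2 := Finset.card_erase_of_mem hjsmem
      have h3 := Finset.card_pos.mpr ⟨js, hjsmem⟩
      omega
    · intro i
      refine Fin.cases ?_ ?_ i
      · simp only [hLam, Fin.cons_zero]
        exact hlamstpos
      · intro p
        simp only [hLam, Fin.cons_succ]
        exact hlampos p
    · intro i
      refine Fin.cases ?_ ?_ i
      · simp only [hZs, Fin.cons_zero]
        exact hz₀0
      · intro p
        simp only [hZs, Fin.cons_succ]
        exact hzs0 p
    · intro i
      refine Fin.cases ?_ ?_ i
      · simp only [hZs, Fin.cons_zero]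
        exact hz₀ker
      · intro p
        simp only [hZs, Fin.cons_succ]
        exact hzsker p
    · intro i
      refine Fin.cases ?_ ?_ i
      · simp only [hZs, Fin.cons_zero]
        exact hz₀bound
      · intro p
        simp only [hZs, Fin.cons_succ]
        exact hzsbound p
    · intro i
      refine Fin.cases ?_ ?_ i
      · simp only [hZs, Fin.cons_zero]
        exact hz₀sign
      · intro p
        simp only [hZs, Fin.cons_succ]
        exact hzssign p
    · intro i
      refine Fin.cases ?_ ?_ i
      · simp only [hZs, Fin.cons_zero]
        exact hz₀gsupp
      · intro p
        simp only [hZs, Fin.cons_succ]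
        exact hzsgsupp p
    · intro j
      have hF : (fun i : Fin (t' + 1) => Lam i * ((Zs i j : ℤ) : ℚ))
          = Fin.cons (lamst * ((z₀ j : ℤ) : ℚ)) (fun i => lam' i * ((zs' i j : ℤ) : ℚ)) := by
        funext i
        refine Fin.cases ?_ ?_ i
        · simp only [hLam, hZs, Fin.cons_zero]
        · intro p
          simp only [hLam, hZs, Fin.cons_succ]
      show x j = ∑ i : Fin (t' + 1), Lam i * ((Zs i j : ℤ) : ℚ)
      rw [hF, Fin.sum_cons, ← hzssum j]
      simp only [hx']
      ring

theorem stmt1 {k m : ℕ} (A : Matrix (Fin k) (Fin m) ℤ) (g : Fin m → ℤ)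
    (hg0 : g ≠ 0) (hker : A.mulVec g = 0)
    (hmin : ∀ z : Fin m → ℤ, z ≠ 0 → A.mulVec z = 0 → ConformalZ z g → z = g) :
    ∀ j, (g j).natAbs ≤ (2 * m * maxEnt A + 1) ^ m := by
  classical
  rcases Nat.eq_zero_or_pos m with hm | hm
  · subst hm
    intro j
    exact j.elim0
  by_cases ha0 : maxEnt A = 0
  · -- zero matrix case
    obtain ⟨j0, hj0⟩ := Function.ne_iff.mp hg0
    have hj0' : g j0 ≠ 0 := by simpa using hj0
    set z : Fin m → ℤ := fun j => if j = j0 then (if 0 < g j0 then 1 else -1) else 0 with hz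
    have hzj0 : z j0 ≠ 0 := by
      simp only [hz, if_pos rfl]
      split_ifs <;> norm_num
    have hz0 : z ≠ 0 := Function.ne_iff.mpr ⟨j0, by simpa using hzj0⟩
    have hA0 : ∀ i j, A i j = 0 := by
      intro i j
      have := entry_le_maxEnt A i j
      rw [ha0, Nat.le_zero, Int.natAbs_eq_zero] at this
      exact this
    have hzker : A.mulVec z = 0 := by
      funext i
      simp [Matrix.mulVec, dotProduct, hA0]
    have hconf : ConformalZ z g := by
      intro j
      by_cases hj : j = j0
      · subst hj
        constructor
        · simp only [hz, if_pos rfl]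
          split_ifs with h
          · nlinarith
          · have : g j < 0 := lt_of_le_of_ne (not_lt.mp h) hj0'
            nlinarith
        · simp only [hz, if_pos rfl]
          have h1 : (1:ℤ) ≤ |g j| := Int.one_le_abs hj0'
          split_ifs <;> simpa using h1
      · constructor
        · simp [hz, hj]
        · simp [hz, hj]
    have hzg := hmin z hz0 hzker hconf
    intro j
    rw [← hzg, ha0]
    have : (z j).natAbs ≤ 1 := by
      simp only [hz]
      split_ifs <;> simp
    calc (z j).natAbs ≤ 1 := this
      _ ≤ (2 * m * 0 + 1) ^ m := by simp
  · have ha1 : 1 ≤ maxEnt A := Nat.pos_of_ne_zero ha0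
    set a : ℕ := maxEnt A with haa
    set C : ℕ := (2 * m * a + 1) ^ (m - 1) with hC
    set xq : Fin m → ℚ := fun j => ((g j : ℤ) : ℚ) with hxq
    have hkerq : (A.map (fun t : ℤ => (t : ℚ))).mulVec xq = 0 := by
      funext i
      have := congrFun hker i
      simp only [Matrix.mulVec, dotProduct, Pi.zero_apply] at this ⊢
      simp only [Matrix.map_apply, hxq]
      have hc : ((∑ j, A i j * g j : ℤ) : ℚ) = 0 := by rw [this]; simp
      push_cast at hc
      exact hc
    have hsignq : ∀ j, 0 ≤ xq j * (g j : ℚ) := fun j => mul_self_nonneg _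
    have hsuppq : ∀ j, g j = 0 → xq j = 0 := by
      intro j hj
      simp [hxq, hj]
    obtain ⟨t, lam, z, htle, hlampos, hz0s, hkers, hbound, hsigns, hgsupp, hsum⟩ :=
      decomp A g m xq
        (le_trans (Finset.card_filter_le _ _) (by simp)) hkerq hsignq hsuppq
    have ht : t ≤ m := le_trans htle (le_trans (Finset.card_filter_le _ _) (by simp))
    by_cases hex : ∃ i, 1 ≤ lam i
    · obtain ⟨i0, hi0⟩ := hex
      have hconf : ConformalZ (z i0) g := by
        intro j
        constructor
        · exact_mod_cast hsigns i0 j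
        · by_cases hgj : g j = 0
          · rw [hgsupp i0 j hgj, hgj]
          · have hgqne : ((g j : ℤ) : ℚ) ≠ 0 := Int.cast_ne_zero.mpr hgj
            have hτg : ∀ i, 0 ≤ (lam i * ((z i j : ℤ) : ℚ)) * ((g j : ℤ) : ℚ) := by
              intro i
              rw [mul_assoc]
              exact mul_nonneg (hlampos i).le (hsigns i j)
            have key : |lam i0 * ((z i0 j : ℤ) : ℚ)| ≤ |((g j : ℤ) : ℚ)| := by
              rcases lt_or_gt_of_ne hgqne with hneg | hpos
              · have hτ : ∀ i, lam i * ((z i j : ℤ) : ℚ) ≤ 0 := by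
                  intro i
                  nlinarith [hτg i]
                have h1 : -(lam i0 * ((z i0 j : ℤ) : ℚ))
                    ≤ ∑ i, -(lam i * ((z i j : ℤ) : ℚ)) :=
                  Finset.single_le_sum (f := fun i => -(lam i * ((z i j : ℤ) : ℚ)))
                    (fun i _ => neg_nonneg.mpr (hτ i)) (Finset.mem_univ i0)
                have h2 : ∑ i, -(lam i * ((z i j : ℤ) : ℚ)) = -((g j : ℤ) : ℚ) := by
                  rw [Finset.sum_neg_distrib, ← hsum j]
                rw [abs_of_nonpos (hτ i0), abs_of_neg hneg]
                linarith [h1, h2 ▸ h1]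
              · have hτ : ∀ i, 0 ≤ lam i * ((z i j : ℤ) : ℚ) := by
                  intro i
                  nlinarith [hτg i]
                have h1 : lam i0 * ((z i0 j : ℤ) : ℚ)
                    ≤ ∑ i, lam i * ((z i j : ℤ) : ℚ) :=
                  Finset.single_le_sum (fun i _ => hτ i) (Finset.mem_univ i0)
                rw [abs_of_nonneg (hτ i0), abs_of_pos hpos]
                rw [show ((g j : ℤ) : ℚ) = xq j from rfl, hsum j]
                exact h1
            have h3 : |((z i0 j : ℤ) : ℚ)| ≤ |((g j : ℤ) : ℚ)| := by
              have h4 : |((z i0 j : ℤ) : ℚ)| ≤ |lam i0 * ((z i0 j : ℤ) : ℚ)| := by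
                rw [abs_mul, abs_of_pos (hlampos i0)]
                nlinarith [abs_nonneg ((z i0 j : ℤ) : ℚ)]
              linarith
            rw [← Int.cast_abs, ← Int.cast_abs] at h3
            exact_mod_cast h3
      have hzg := hmin (z i0) (hz0s i0) (hkers i0) hconf
      intro j
      rw [← hzg]
      calc (z i0 j).natAbs ≤ C := hbound i0 j
        _ ≤ (2 * m * a + 1) ^ m := by
          rw [hC]
          exact Nat.pow_le_pow_right (by omega) (by omega)
    · push_neg at hex
      intro j
      have htau : ∀ i, |lam i * ((z i j : ℤ) : ℚ)| ≤ (C : ℚ) := by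
        intro i
        rw [abs_mul, abs_of_pos (hlampos i)]
        have hzb : |((z i j : ℤ) : ℚ)| ≤ (C : ℚ) := by
          rw [← Int.cast_abs]
          have hb : |z i j| ≤ (C : ℤ) := by
            rw [Int.abs_eq_natAbs]
            exact_mod_cast hbound i j
          exact_mod_cast hb
        calc lam i * |((z i j : ℤ) : ℚ)| ≤ 1 * (C : ℚ) :=
              mul_le_mul (hex i).le hzb (abs_nonneg _) zero_le_one
          _ = (C : ℚ) := one_mul _
      have hgq : |((g j : ℤ) : ℚ)| ≤ (t : ℚ) * (C : ℚ) := by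
        rw [show ((g j : ℤ) : ℚ) = xq j from rfl, hsum j]
        calc |∑ i, lam i * ((z i j : ℤ) : ℚ)| ≤ ∑ i, |lam i * ((z i j : ℤ) : ℚ)| :=
              Finset.abs_sum_le_sum_abs _ _
          _ ≤ ∑ _i : Fin t, (C : ℚ) := Finset.sum_le_sum (fun i _ => htau i)
          _ = (t : ℚ) * (C : ℚ) := by
              rw [Finset.sum_const, Finset.card_univ, Fintype.card_fin, nsmul_eq_mul]
      have hnat : (2 * m * a + 1) * C = (2 * m * a + 1) ^ m := by
        rw [hC, ← pow_succ']
        congr 1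
        omega
      have hfin : |((g j : ℤ) : ℚ)| ≤ (((2 * m * a + 1) ^ m : ℕ) : ℚ) := by
        calc |((g j : ℤ) : ℚ)| ≤ (t : ℚ) * (C : ℚ) := hgq
          _ ≤ (m : ℚ) * (C : ℚ) := by
              apply mul_le_mul_of_nonneg_right _ (by positivity)
              exact_mod_cast ht
          _ ≤ (((2 * m * a + 1) : ℕ) : ℚ) * (C : ℚ) := by
              apply mul_le_mul_of_nonneg_right _ (by positivity)
              have hma : m ≤ 2 * m * a + 1 := by nlinarith
              exact_mod_cast hma
          _ = (((2 * m * a + 1) ^ m : ℕ) : ℚ) := by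
              rw [← hnat]
              push_cast
              ring
      have hzint : |g j| ≤ (((2 * m * a + 1) ^ m : ℕ) : ℤ) := by
        rw [← Int.cast_abs] at hfin
        exact_mod_cast hfin
      rw [Int.abs_eq_natAbs] at hzint
      exact_mod_cast hzint
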